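/- Fix μ0, μ1 > 0 and real numbers d0, d1, and define H(ω) := e^{−ω}·(ω − μ0·(ω² + d0))·(ω − μ1·(ω² + d1)) − e^{ω}·(ω + μ0·(ω² + d0))·(ω + μ1·(ω² + d1)). Then the set {ω > 0 : H(ω) = 0} is finite; consequently, the string–point-mass eigenvalue problem has only finitely many (possibly zero) positive eigenvalues. -/

import Mathlib

open Real Set

private lemma H_neg_of_large (μ d : ℝ) (hμ : 0 < μ) {ω : ℝ}
    (hω : max (2/μ) (μ*|d|) < ω) : ω < μ*(ω^2 + d) := by
  have h1 : 2/μ < ω := lt_of_le_of_lt (le_max_left _ _) hω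
  have h2 : μ*|d| < ω := lt_of_le_of_lt (le_max_right _ _) hω
  have hω0 : 0 < ω := lt_of_le_of_lt (by positivity) h1
  have h3 : 2 * ω ≤ μ * ω^2 := by
    have : 2 ≤ μ * ω := by
      rw [div_lt_iff₀ hμ] at h1; nlinarith
    nlinarith
  have h4 : -μ * d ≤ μ * |d| := by
    have := neg_abs_le d
    nlinarith
  nlinarith

private lemma zeros_finite (μ0 μ1 d0 d1 : ℝ) (hμ0 : 0 < μ0) (hμ1 : 0 < μ1) :
    {ω : ℝ | 0 < ω ∧
      Real.exp (-ω) * (ω - μ0*(ω^2 + d0)) * (ω - μ1*(ω^2 + d1))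
        - Real.exp ω * (ω + μ0*(ω^2 + d0)) * (ω + μ1*(ω^2 + d1)) = 0}.Finite := by
  set H : ℝ → ℝ := fun ω => Real.exp (-ω) * (ω - μ0*(ω^2 + d0)) * (ω - μ1*(ω^2 + d1))
        - Real.exp ω * (ω + μ0*(ω^2 + d0)) * (ω + μ1*(ω^2 + d1)) with hH
  set R : ℝ := max (max (2/μ0) (μ0*|d0|)) (max (2/μ1) (μ1*|d1|)) with hR
  have hneg : ∀ ω : ℝ, R < ω → H ω < 0 := by
    intro ω hω
    have ha : ω < μ0*(ω^2 + d0) :=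
      H_neg_of_large μ0 d0 hμ0 (lt_of_le_of_lt (le_max_left _ _) hω)
    have hb : ω < μ1*(ω^2 + d1) :=
      H_neg_of_large μ1 d1 hμ1 (lt_of_le_of_lt (le_max_right _ _) hω)
    have hω0 : 0 < ω := by
      have : (0:ℝ) ≤ 2/μ0 := by positivity
      have h1 : 2/μ0 ≤ R := le_trans (le_max_left _ _) (le_max_left _ _)
      linarith
    have he : Real.exp (-ω) < Real.exp ω := Real.exp_lt_exp.2 (by linarith)
    have he0 : 0 < Real.exp (-ω) := Real.exp_pos _
    have hPQ : (μ0*(ω^2+d0) - ω) * (μ1*(ω^2+d1) - ω) < (ω + μ0*(ω^2+d0)) * (ω + μ1*(ω^2+d1)) := by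
      nlinarith
    have hQ : (0:ℝ) < (ω + μ0*(ω^2+d0)) * (ω + μ1*(ω^2+d1)) := by nlinarith
    have hkey : Real.exp (-ω) * ((μ0*(ω^2+d0) - ω) * (μ1*(ω^2+d1) - ω)) <
        Real.exp ω * ((ω + μ0*(ω^2+d0)) * (ω + μ1*(ω^2+d1))) :=
      calc Real.exp (-ω) * ((μ0*(ω^2+d0) - ω) * (μ1*(ω^2+d1) - ω))
          < Real.exp (-ω) * ((ω + μ0*(ω^2+d0)) * (ω + μ1*(ω^2+d1))) :=
            mul_lt_mul_of_pos_left hPQ he0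
        _ < Real.exp ω * ((ω + μ0*(ω^2+d0)) * (ω + μ1*(ω^2+d1))) :=
            mul_lt_mul_of_pos_right he hQ
    simp only [hH]
    nlinarith [hkey]
  have hA : AnalyticOnNhd ℝ H univ := by
    intro x _
    have h1 : AnalyticAt ℝ (fun ω : ℝ => Real.exp (-ω)) x :=
      (analyticAt_id.neg).rexp
    have h2 : AnalyticAt ℝ (fun ω : ℝ => Real.exp ω) x := analyticAt_rexp
    have hp0 : AnalyticAt ℝ (fun ω : ℝ => ω - μ0*(ω^2 + d0)) x :=
      analyticAt_id.sub (analyticAt_const.mul ((analyticAt_id.pow 2).add analyticAt_const))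
    have hp1 : AnalyticAt ℝ (fun ω : ℝ => ω - μ1*(ω^2 + d1)) x :=
      analyticAt_id.sub (analyticAt_const.mul ((analyticAt_id.pow 2).add analyticAt_const))
    have hq0 : AnalyticAt ℝ (fun ω : ℝ => ω + μ0*(ω^2 + d0)) x :=
      analyticAt_id.add (analyticAt_const.mul ((analyticAt_id.pow 2).add analyticAt_const))
    have hq1 : AnalyticAt ℝ (fun ω : ℝ => ω + μ1*(ω^2 + d1)) x :=
      analyticAt_id.add (analyticAt_const.mul ((analyticAt_id.pow 2).add analyticAt_const))
    exact ((h1.mul hp0).mul hp1).sub ((h2.mul hq0).mul hq1)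
  by_contra hinf
  have hinf' : {ω : ℝ | 0 < ω ∧ H ω = 0}.Infinite := hinf
  have hsub : {ω : ℝ | 0 < ω ∧ H ω = 0} ⊆ Icc 0 R := by
    rintro ω ⟨hω0, hωz⟩
    refine ⟨hω0.le, ?_⟩
    by_contra hc
    exact absurd hωz (ne_of_lt (hneg ω (lt_of_not_ge hc)))
  obtain ⟨x, -, hacc⟩ := hinf'.exists_accPt_of_subset_isCompact isCompact_Icc hsub
  rw [accPt_iff_frequently] at hacc
  have hfreq : ∃ᶠ z in nhdsWithin x {x}ᶜ, H z = 0 := by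
    rw [frequently_nhdsWithin_iff]
    exact hacc.mono (fun y hy => ⟨hy.2.2, hy.1⟩)
  have := hA.eqOn_zero_of_preconnected_of_frequently_eq_zero isPreconnected_univ
    (mem_univ x) hfreq
  have h1 : H (R+1) = 0 := this (mem_univ _)
  have h2 : H (R+1) < 0 := hneg _ (by linarith)
  linarith

/-- The set of positive zeros of H is finite; hence the
string–point-mass eigenvalue problem has only finitely many positive
eigenvalues. -/
theorem finitely_many_positive_eigenvalues
    (μ0 μ1 d0 d1 : ℝ) (hμ0 : 0 < μ0) (hμ1 : 0 < μ1) :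
    {ω : ℝ | 0 < ω ∧
      Real.exp (-ω) * (ω - μ0*(ω^2 + d0)) * (ω - μ1*(ω^2 + d1))
        - Real.exp ω * (ω + μ0*(ω^2 + d0)) * (ω + μ1*(ω^2 + d1)) = 0}.Finite ∧
    {lam : ℝ | 0 < lam ∧ ∃ X : ℝ → ℝ, ContDiff ℝ 2 X ∧
        (∀ x ∈ Icc (0:ℝ) 1, deriv (deriv X) x = lam * X x) ∧
        deriv X 0 = μ0 * (lam + d0) * X 0 ∧
        deriv X 1 = -μ1 * (lam + d1) * X 1 ∧
        (∃ x ∈ Icc (0:ℝ) 1, X x ≠ 0)}.Finite := by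
  have hfin := zeros_finite μ0 μ1 d0 d1 hμ0 hμ1
  refine ⟨hfin, Set.Finite.subset (hfin.image (fun ω => ω^2)) ?_⟩
  rintro lam ⟨hlam, X, hX, hode, hb0, hb1, x₀, hx₀, hX0⟩
  set ω := Real.sqrt lam with hωdef
  have hω2 : ω^2 = lam := Real.sq_sqrt hlam.le
  have hωpos : 0 < ω := Real.sqrt_pos.2 hlam
  have hωne : ω ≠ 0 := hωpos.ne'
  refine ⟨ω, ⟨hωpos, ?_⟩, hω2⟩
  -- set up the explicit solution
  set c1 : ℝ := (X 0 + deriv X 0 / ω)/2 with hc1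
  set c2 : ℝ := (X 0 - deriv X 0 / ω)/2 with hc2
  set g1 : ℝ → ℝ := fun x => c1 * Real.exp (ω*x) + c2 * Real.exp (-(ω*x)) with hg1
  set g2 : ℝ → ℝ := fun x => ω * (c1 * Real.exp (ω*x) - c2 * Real.exp (-(ω*x))) with hg2
  -- differentiability facts about X
  have hX' : ContDiff ℝ (1+1 : WithTop ℕ∞) X := by
    exact_mod_cast hX
  rw [contDiff_succ_iff_deriv] at hX'
  obtain ⟨hXdiff, -, hXd1⟩ := hX'
  have hXdiff' : Differentiable ℝ (deriv X) := hXd1.differentiable one_ne_zero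
  -- the linear vector field
  set L : ℝ × ℝ →L[ℝ] ℝ × ℝ :=
    (ContinuousLinearMap.snd ℝ ℝ ℝ).prod (lam • ContinuousLinearMap.fst ℝ ℝ ℝ) with hL
  have hLapp : ∀ p : ℝ × ℝ, L p = (p.2, lam * p.1) := fun p => rfl
  have hv : ∀ _t : ℝ, LipschitzOnWith ‖L‖₊ (fun p : ℝ × ℝ => L p) univ :=
    fun _ => L.lipschitz.lipschitzOnWith
  -- derivative facts for g1, g2
  have hE : ∀ t : ℝ, HasDerivAt (fun x => Real.exp (ω*x)) (Real.exp (ω*t) * ω) t := by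
    intro t
    simpa using (((hasDerivAt_id t).const_mul ω).exp)
  have hE' : ∀ t : ℝ, HasDerivAt (fun x => Real.exp (-(ω*x))) (-(Real.exp (-(ω*t)) * ω)) t := by
    intro t
    have := (((hasDerivAt_id t).const_mul ω).neg).exp
    simpa using this
  have hg1' : ∀ t : ℝ, HasDerivAt g1 (g2 t) t := by
    intro t
    have h := ((hE t).const_mul c1).add ((hE' t).const_mul c2)
    refine h.congr_deriv ?_
    simp only [hg2]; ring
  have hg2' : ∀ t : ℝ, HasDerivAt g2 (lam * g1 t) t := by
    intro t
    have h := (((hE t).const_mul c1).sub ((hE' t).const_mul c2)).const_mul ω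
    refine h.congr_deriv ?_
    simp only [hg1]
    rw [← hω2]; ring
  -- uniqueness of ODE solutions
  have heq : EqOn (fun x => (X x, deriv X x)) (fun x => (g1 x, g2 x)) (Icc (0:ℝ) 1) := by
    apply ODE_solution_unique_of_mem_Icc_right (v := fun _t p => L p)
      (s := fun _ => (univ : Set (ℝ × ℝ))) (fun t _ => hv t)
    · exact (hXdiff.continuous.prodMk hXdiff'.continuous).continuousOn
    · intro t ht
      have h1 : HasDerivAt (fun x => (X x, deriv X x)) (deriv X t, deriv (deriv X) t) t :=
        ((hXdiff t).hasDerivAt).prodMk ((hXdiff' t).hasDerivAt)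
      have h2 : deriv (deriv X) t = lam * X t := hode t (Ico_subset_Icc_self ht)
      rw [hLapp]
      exact (h2 ▸ h1).hasDerivWithinAt
    · intro t _; trivial
    · exact ((continuous_const.mul ((continuous_const.mul continuous_id).rexp)).add
        (continuous_const.mul ((continuous_const.mul continuous_id).neg.rexp))).prodMk
        (continuous_const.mul ((continuous_const.mul ((continuous_const.mul continuous_id).rexp)).sub
          (continuous_const.mul ((continuous_const.mul continuous_id).neg.rexp)))) |>.continuousOn
    · intro t _
      rw [hLapp]
      exact ((hg1' t).prodMk (hg2' t)).hasDerivWithinAt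
    · intro t _; trivial
    · have e1 : g1 0 = X 0 := by
        simp only [hg1, mul_zero, neg_zero, Real.exp_zero, mul_one, hc1, hc2]; ring
      have e2 : g2 0 = deriv X 0 := by
        simp only [hg2, mul_zero, neg_zero, Real.exp_zero, mul_one, hc1, hc2]
        field_simp
        ring
      simp only [e1, e2]
  have hXg : ∀ x ∈ Icc (0:ℝ) 1, X x = g1 x := fun x hx => congrArg Prod.fst (heq hx)
  have hXg' : ∀ x ∈ Icc (0:ℝ) 1, deriv X x = g2 x := fun x hx => congrArg Prod.snd (heq hx)
  -- nontriviality of (c1, c2)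
  have hcne : c1 ≠ 0 ∨ c2 ≠ 0 := by
    by_contra hc
    push_neg at hc
    obtain ⟨h1, h2⟩ := hc
    apply hX0
    rw [hXg x₀ hx₀, hg1]
    simp [h1, h2]
  -- boundary conditions in terms of c1, c2
  set E : ℝ := Real.exp ω with hEdef
  have hEne : E ≠ 0 := (Real.exp_pos ω).ne'
  have hEinv : Real.exp (-ω) = E⁻¹ := by rw [hEdef, Real.exp_neg]
  have hX00 : X 0 = c1 + c2 := by
    rw [hXg 0 (by norm_num), hg1]; simp
  have hX0' : deriv X 0 = ω * (c1 - c2) := by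
    rw [hXg' 0 (by norm_num), hg2]; simp
  have hX11 : X 1 = c1 * E + c2 * E⁻¹ := by
    rw [hXg 1 (by norm_num), hg1, hEdef, ← Real.exp_neg]; simp
  have hX1' : deriv X 1 = ω * (c1 * E - c2 * E⁻¹) := by
    rw [hXg' 1 (by norm_num), hg2, hEdef, ← Real.exp_neg]; simp
  have Eq1 : ω * (c1 - c2) = μ0 * (ω^2 + d0) * (c1 + c2) := by
    rw [← hX00, ← hX0', hω2]; exact hb0
  have Eq2 : ω * (c1 * E - c2 * E⁻¹) = -μ1 * (ω^2 + d1) * (c1 * E + c2 * E⁻¹) := by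
    rw [← hX11, ← hX1', hω2]; exact hb1
  -- deduce H ω = 0
  rw [hEinv, hEdef, ← hEdef]
  rcases hcne with hc | hc
  · have key : (E⁻¹ * (ω - μ0*(ω^2 + d0)) * (ω - μ1*(ω^2 + d1))
        - E * (ω + μ0*(ω^2 + d0)) * (ω + μ1*(ω^2 + d1))) * c1 = 0 := by
      linear_combination (E⁻¹*(ω - μ1*(ω^2+d1))) * Eq1 - (ω + μ0*(ω^2+d0)) * Eq2
    exact (mul_eq_zero.mp key).resolve_right hc
  · have key : (E⁻¹ * (ω - μ0*(ω^2 + d0)) * (ω - μ1*(ω^2 + d1))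
        - E * (ω + μ0*(ω^2 + d0)) * (ω + μ1*(ω^2 + d1))) * c2 = 0 := by
      linear_combination ((ω + μ1*(ω^2+d1))*E) * Eq1 - (ω - μ0*(ω^2+d0)) * Eq2
    exact (mul_eq_zero.mp key).resolve_right hc
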